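/- Let h(s) = a₁s + a₂ with a₁ ∈ ℂ*, a₂ ∈ ℂ, and b ∈ ℂ*. The assignments p·x = x(s-1)h(s), q·x = x(s+1)b, r·x = -a₁b·x, s·x = s·x(s) for x = x(s) ∈ ℂ[s] define an H₄-module structure on ℂ[s] (denoted M_{(h,b)}). -/
import Mathlib


open Polynomial

/-- For h(s) = a₁s + a₂ with a₁ ≠ 0 and b ≠ 0, the assignments
p·x = x(s-1)h(s), q·x = x(s+1)b, r·x = -a₁b·x, s·x = s·x(s) define an
H₄-module structure on ℂ[s] (the module M_{(h,b)}): the operators satisfy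
[p,q] = r, [s,p] = p, [s,q] = -q, [r,·] = 0. -/
theorem stmt3 (a₁ a₂ b : ℂ) (ha₁ : a₁ ≠ 0) (hb : b ≠ 0) :
    ∀ (P Q R S : Module.End ℂ (Polynomial ℂ)),
      (∀ x, P x = Polynomial.aeval (Polynomial.X - Polynomial.C 1 : Polynomial ℂ) x *
          (Polynomial.C a₁ * Polynomial.X + Polynomial.C a₂)) →
      (∀ x, Q x = Polynomial.aeval (Polynomial.X + Polynomial.C 1 : Polynomial ℂ) x *
          Polynomial.C b) →
      (∀ x, R x = (-(a₁ * b)) • x) →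
      (∀ x, S x = Polynomial.X * x) →
      (⁅P, Q⁆ = R ∧ ⁅S, P⁆ = P ∧ ⁅S, Q⁆ = -Q ∧
        ⁅R, P⁆ = 0 ∧ ⁅R, Q⁆ = 0 ∧ ⁅R, S⁆ = 0) := by
  intro P Q R S hP hQ hR hS
  have comp1 : ∀ x : Polynomial ℂ,
      aeval (X - 1 : Polynomial ℂ) (aeval (X + 1 : Polynomial ℂ) x) = x := by
    intro x
    rw [← Polynomial.aeval_algHom_apply]
    simp
  have comp2 : ∀ x : Polynomial ℂ,
      aeval (X + 1 : Polynomial ℂ) (aeval (X - 1 : Polynomial ℂ) x) = x := by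
    intro x
    rw [← Polynomial.aeval_algHom_apply]
    simp
  refine ⟨?_, ?_, ?_, ?_, ?_, ?_⟩ <;> refine LinearMap.ext fun x => ?_ <;>
    simp only [Ring.lie_def, LinearMap.sub_apply, Module.End.mul_apply, hP, hQ, hR, hS,
      LinearMap.neg_apply, LinearMap.zero_apply, map_mul, map_add, map_sub, map_smul,
      aeval_X, aeval_C, map_one, smul_eq_C_mul, Polynomial.algebraMap_eq, map_neg, map_mul,
      comp1, comp2] <;>
    ring
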